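/- In the setting of the inertial forward-backward-forward algorithm with f, h proper/differentiable as in Problem 1, for every n ≥ 2 the vector s_n = (1/λ_n)(∇u(x_n) - ∇u(p_n)) + ∇h(p_n) - ∇h(x_n) + (α_n/λ_n)(p_{n-1} - x_{n-1}) + (α_n λ_{n-1}/λ_n)(∇h(x_{n-1}) - ∇h(p_{n-1})) belongs to ∂(f+h)(p_n), and ‖s_n‖ ≤ (L_{∇u}/λ_n + L_{∇h})·‖x_n - p_n‖ + (α_n/λ_n)(1 + λ_{n-1}L_{∇h})·‖x_{n-1} - p_{n-1}‖. -/

import Mathlib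

open Filter Topology

noncomputable section

variable {E : Type*} [NormedAddCommGroup E] [InnerProductSpace ℝ E]

/-- The Fréchet (viscosity) subdifferential of an extended-real-valued function. -/
def frechetSubdiff (f : E → EReal) (x : E) : Set E :=
  {v | f x ≠ ⊤ ∧ ∀ ε : ℝ, 0 < ε →
    ∀ᶠ y in 𝓝 x,
      f x + ((inner ℝ v (y - x) : ℝ) : EReal) - ((ε * ‖y - x‖ : ℝ) : EReal) ≤ f y}

/-- The limiting (Mordukhovich) subdifferential. -/
def limitingSubdiff (f : E → EReal) (x : E) : Set E :=
  {v | ∃ xs vs : ℕ → E,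
    Tendsto xs atTop (𝓝 x) ∧
    Tendsto (fun n => f (xs n)) atTop (𝓝 (f x)) ∧
    (∀ n, vs n ∈ frechetSubdiff f (xs n)) ∧
    Tendsto vs atTop (𝓝 v)}

end

theorem stmt_15 {m : ℕ} (f : EuclideanSpace ℝ (Fin m) → EReal)
    (hproper : ∃ z, f z ≠ ⊤) (hbot : ∀ z, f z ≠ ⊥)
    (hlsc : LowerSemicontinuous f)
    (hfbdd : ∃ M : ℝ, ∀ z, (M : EReal) ≤ f z)
    (h : EuclideanSpace ℝ (Fin m) → ℝ)
    (h' : EuclideanSpace ℝ (Fin m) → EuclideanSpace ℝ (Fin m))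
    (hdiffh : ∀ z, HasGradientAt h (h' z) z)
    (Lh : ℝ) (hLh : 0 ≤ Lh)
    (hliph : ∀ z w, ‖h' z - h' w‖ ≤ Lh * ‖z - w‖)
    (u : EuclideanSpace ℝ (Fin m) → ℝ)
    (u' : EuclideanSpace ℝ (Fin m) → EuclideanSpace ℝ (Fin m))
    (hdiffu : ∀ z, HasGradientAt u (u' z) z)
    (σ : ℝ) (hσ : 0 < σ)
    (hconv : ConvexOn ℝ Set.univ (fun z => u z - σ / 2 * ‖z‖ ^ 2))
    (Lu : ℝ) (hLu : 0 < Lu)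
    (hlipu : ∀ z w, ‖u' z - u' w‖ ≤ Lu * ‖z - w‖)
    (lamL lamU α : ℝ) (hlamL : 0 < lamL) (hα : 0 ≤ α)
    (lam al : ℕ → ℝ)
    (hlam : ∀ n, 1 ≤ n → lamL ≤ lam n ∧ lam n ≤ lamU)
    (hal : ∀ n, 1 ≤ n → 0 ≤ al n ∧ al n ≤ α)
    (x p : ℕ → EuclideanSpace ℝ (Fin m))
    (hargmin : ∀ n, 1 ≤ n → ∀ y,
      f (p n) + ((1 / lam n * (u (p n) - u (x n) - (inner ℝ (u' (x n)) (p n - x n) : ℝ)) +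
        (inner ℝ (p n) (h' (x n)) : ℝ) +
        al n / lam n * (inner ℝ (p n) (x (n - 1) - x n) : ℝ) : ℝ) : EReal) ≤
      f y + ((1 / lam n * (u y - u (x n) - (inner ℝ (u' (x n)) (y - x n) : ℝ)) +
        (inner ℝ y (h' (x n)) : ℝ) +
        al n / lam n * (inner ℝ y (x (n - 1) - x n) : ℝ) : ℝ) : EReal))
    (hupd : ∀ n, 1 ≤ n → x (n + 1) = p n + lam n • (h' (x n) - h' (p n))) :
    ∀ n, 2 ≤ n →
      ((1 / lam n) • (u' (x n) - u' (p n)) + (h' (p n) - h' (x n)) +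
        (al n / lam n) • (p (n - 1) - x (n - 1)) +
        (al n * lam (n - 1) / lam n) • (h' (x (n - 1)) - h' (p (n - 1)))) ∈
        limitingSubdiff (fun z => f z + (h z : EReal)) (p n) ∧
      ‖(1 / lam n) • (u' (x n) - u' (p n)) + (h' (p n) - h' (x n)) +
        (al n / lam n) • (p (n - 1) - x (n - 1)) +
        (al n * lam (n - 1) / lam n) • (h' (x (n - 1)) - h' (p (n - 1)))‖ ≤
        (Lu / lam n + Lh) * ‖x n - p n‖ +
          al n / lam n * (1 + lam (n - 1) * Lh) * ‖x (n - 1) - p (n - 1)‖ := by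
  intro n hn
  have hn1 : 1 ≤ n := by omega
  set k := n - 1 with hk
  have hk1 : 1 ≤ k := by omega
  have hkn : k + 1 = n := by omega
  have hlpos : 0 < lam n := lt_of_lt_of_le hlamL (hlam n hn1).1
  have hlkpos : 0 < lam k := lt_of_lt_of_le hlamL (hlam k hk1).1
  have halpos : 0 ≤ al n := (hal n hn1).1
  have hxn : x n = p k + lam k • (h' (x k) - h' (p k)) := by
    rw [← hkn]; exact hupd k hk1
  set sv : EuclideanSpace ℝ (Fin m) :=
    (1 / lam n) • (u' (x n) - u' (p n)) + (h' (p n) - h' (x n)) +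
      (al n / lam n) • (p k - x k) +
      (al n * lam k / lam n) • (h' (x k) - h' (p k)) with hsv
  -- the auxiliary smooth function g appearing in the argmin property
  set g : EuclideanSpace ℝ (Fin m) → ℝ := fun y =>
    1 / lam n * (u y - u (x n) - (inner ℝ (u' (x n)) (y - x n) : ℝ)) +
      (inner ℝ y (h' (x n)) : ℝ) + al n / lam n * (inner ℝ y (x k - x n) : ℝ) with hg
  -- derivative facts
  have hinner : ∀ c : EuclideanSpace ℝ (Fin m), ∀ q,
      HasFDerivAt (fun y : EuclideanSpace ℝ (Fin m) => (inner ℝ y c : ℝ)) (innerSL ℝ c) q := by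
    intro c q
    have : (fun y : EuclideanSpace ℝ (Fin m) => (inner ℝ y c : ℝ)) =
        fun y => (inner ℝ c y : ℝ) := funext fun y => real_inner_comm c y
    rw [this]; exact (innerSL ℝ c).hasFDerivAt
  have hGD : HasFDerivAt
      (fun y => h y - g y - (inner ℝ y sv : ℝ))
      ((InnerProductSpace.toDual ℝ _ (h' (p n))) -
        ((1 / lam n) • ((InnerProductSpace.toDual ℝ _ (u' (p n))) - innerSL ℝ (u' (x n))) +
          innerSL ℝ (h' (x n)) + (al n / lam n) • innerSL ℝ (x k - x n)) -
        innerSL ℝ sv) (p n) := by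
    have hh := hasGradientAt_iff_hasFDerivAt.mp (hdiffh (p n))
    have hu := hasGradientAt_iff_hasFDerivAt.mp (hdiffu (p n))
    have h1 : HasFDerivAt (fun y => u y - u (x n) - (inner ℝ (u' (x n)) (y - x n) : ℝ))
        ((InnerProductSpace.toDual ℝ _ (u' (p n))) - innerSL ℝ (u' (x n))) (p n) := by
      have h2 : HasFDerivAt (fun y : EuclideanSpace ℝ (Fin m) =>
          (inner ℝ (u' (x n)) (y - x n) : ℝ)) (innerSL ℝ (u' (x n))) (p n) := by
        have : (fun y : EuclideanSpace ℝ (Fin m) => (inner ℝ (u' (x n)) (y - x n) : ℝ)) =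
            fun y => (inner ℝ (u' (x n)) y : ℝ) - (inner ℝ (u' (x n)) (x n) : ℝ) := by
          funext y; rw [inner_sub_right]
        rw [this]
        exact ((innerSL ℝ (u' (x n))).hasFDerivAt).sub_const _
      exact (hu.sub_const _).sub h2
    have hgD : HasFDerivAt g
        ((1 / lam n) • ((InnerProductSpace.toDual ℝ _ (u' (p n))) - innerSL ℝ (u' (x n))) +
          innerSL ℝ (h' (x n)) + (al n / lam n) • innerSL ℝ (x k - x n)) (p n) := by
      exact ((h1.const_mul _).add (hinner (h' (x n)) (p n))).add
        ((hinner (x k - x n) (p n)).const_mul _)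
    exact (hh.sub hgD).sub (hinner sv (p n))
  have hDzero : ((InnerProductSpace.toDual ℝ _ (h' (p n))) -
        ((1 / lam n) • ((InnerProductSpace.toDual ℝ _ (u' (p n))) - innerSL ℝ (u' (x n))) +
          innerSL ℝ (h' (x n)) + (al n / lam n) • innerSL ℝ (x k - x n)) -
        innerSL ℝ sv) = 0 := by
    ext w
    simp only [ContinuousLinearMap.sub_apply, ContinuousLinearMap.add_apply,
      ContinuousLinearMap.smul_apply, InnerProductSpace.toDual_apply_apply, innerSL_apply_apply,
      ContinuousLinearMap.zero_apply, smul_eq_mul, hsv, hxn]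
    simp only [inner_add_left, inner_sub_left, inner_smul_left, real_inner_smul_left,
      conj_trivial, add_sub_cancel_left]
    field_simp
    ring
  rw [hDzero] at hGD
  -- little-o estimate
  have hlo : (fun y => (h y - g y - (inner ℝ y sv : ℝ)) -
      (h (p n) - g (p n) - (inner ℝ (p n) sv : ℝ))) =o[𝓝 (p n)] fun y => y - p n := by
    have hg0 : HasGradientAt (fun y => h y - g y - (inner ℝ y sv : ℝ)) 0 (p n) := by
      have := hasFDerivAt_iff_hasGradientAt.mp hGD
      rwa [map_zero] at this
    have := hasGradientAt_iff_isLittleO.mp hg0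
    simpa using this
  -- f (p n) is finite
  obtain ⟨z₀, hz₀⟩ := hproper
  have hfp_ne_top : f (p n) ≠ ⊤ := by
    intro htop
    have := hargmin n hn1 z₀
    rw [htop, EReal.top_add_coe] at this
    rw [top_le_iff] at this
    exact (EReal.add_lt_top hz₀ (EReal.coe_ne_top _)).ne this
  set a : ℝ := (f (p n)).toReal with ha
  have hfa : f (p n) = (a : EReal) := (EReal.coe_toReal hfp_ne_top (hbot _)).symm
  have hfrechet : sv ∈ frechetSubdiff (fun z => f z + (h z : EReal)) (p n) := by
    constructor
    · simp only [hfa, ← EReal.coe_add]; exact EReal.coe_ne_top _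
    · intro ε hε
      filter_upwards [hlo.def hε] with y hy
      by_cases hfy : f y = ⊤
      · simp only [hfy, EReal.top_add_coe]; exact le_top
      · set b : ℝ := (f y).toReal with hb
        have hfb : f y = (b : EReal) := (EReal.coe_toReal hfy (hbot _)).symm
        have harg : a + g (p n) ≤ b + g y := by
          have := hargmin n hn1 y
          rw [hfa, hfb, ← EReal.coe_add, ← EReal.coe_add, EReal.coe_le_coe_iff] at this
          exact this
        have hy' : |(h y - g y - (inner ℝ y sv : ℝ)) -
            (h (p n) - g (p n) - (inner ℝ (p n) sv : ℝ))| ≤ ε * ‖y - p n‖ := by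
          have := hy
          rwa [Real.norm_eq_abs] at this
        have hinnersub : (inner ℝ sv (y - p n) : ℝ) =
            (inner ℝ y sv : ℝ) - (inner ℝ (p n) sv : ℝ) := by
          rw [inner_sub_right, real_inner_comm sv y, real_inner_comm sv (p n)]
        simp only [hfa, hfb, ← EReal.coe_add, ← EReal.coe_sub, EReal.coe_le_coe_iff]
        have habs := abs_le.mp hy'
        linarith [habs.1]
  constructor
  · exact ⟨fun _ => p n, fun _ => sv, tendsto_const_nhds, tendsto_const_nhds,
      fun _ => hfrechet, tendsto_const_nhds⟩
  · have hA : ‖(1 / lam n) • (u' (x n) - u' (p n))‖ ≤ Lu / lam n * ‖x n - p n‖ := by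
      rw [norm_smul, Real.norm_eq_abs, abs_of_pos (by positivity)]
      have := hlipu (x n) (p n)
      calc 1 / lam n * ‖u' (x n) - u' (p n)‖ ≤ 1 / lam n * (Lu * ‖x n - p n‖) := by
            apply mul_le_mul_of_nonneg_left this (by positivity)
        _ = Lu / lam n * ‖x n - p n‖ := by ring
    have hB : ‖h' (p n) - h' (x n)‖ ≤ Lh * ‖x n - p n‖ := by
      have := hliph (p n) (x n)
      rwa [norm_sub_rev (p n) (x n)] at this
    have hC : ‖(al n / lam n) • (p k - x k)‖ ≤ al n / lam n * ‖x k - p k‖ := by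
      rw [norm_smul, Real.norm_eq_abs, abs_of_nonneg (by positivity), norm_sub_rev]
    have hD : ‖(al n * lam k / lam n) • (h' (x k) - h' (p k))‖ ≤
        al n / lam n * (lam k * Lh) * ‖x k - p k‖ := by
      rw [norm_smul, Real.norm_eq_abs, abs_of_nonneg (by positivity)]
      have := hliph (x k) (p k)
      calc al n * lam k / lam n * ‖h' (x k) - h' (p k)‖
          ≤ al n * lam k / lam n * (Lh * ‖x k - p k‖) := by
            apply mul_le_mul_of_nonneg_left this (by positivity)
        _ = al n / lam n * (lam k * Lh) * ‖x k - p k‖ := by ring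
    have htri : ‖sv‖ ≤ ‖(1 / lam n) • (u' (x n) - u' (p n))‖ + ‖h' (p n) - h' (x n)‖ +
        ‖(al n / lam n) • (p k - x k)‖ + ‖(al n * lam k / lam n) • (h' (x k) - h' (p k))‖ := by
      rw [hsv]
      set A := (1 / lam n) • (u' (x n) - u' (p n))
      set B := h' (p n) - h' (x n)
      set C := (al n / lam n) • (p k - x k)
      set D := (al n * lam k / lam n) • (h' (x k) - h' (p k))
      linarith [norm_add_le (A + B + C) D, norm_add_le (A + B) C, norm_add_le A B]
    have hexpand : al n / lam n * (1 + lam k * Lh) * ‖x k - p k‖ =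
        al n / lam n * ‖x k - p k‖ + al n / lam n * (lam k * Lh) * ‖x k - p k‖ := by ring
    rw [add_mul, hexpand]
    linarith
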